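/- Let F be a differential field, h ∈ F, and M₂ = f gᵀ with f, g ∈ Fⁿ satisfying fᵀg = f'ᵀg = 0. Then M = h·I + M₂ commutes with its derivative M'. -/

import Mathlib

def IsDeriv {F : Type*} [Field F] (d : F → F) : Prop :=
  (∀ a b, d (a + b) = d a + d b) ∧ (∀ a b, d (a * b) = d a * b + a * d b)

lemma deriv_sum_aux {F : Type*} [Field F] {d : F → F}
    (hadd : ∀ a b, d (a + b) = d a + d b) (hd0 : d 0 = 0)
    {ι : Type*} (s : Finset ι) (u : ι → F) :
    d (∑ i ∈ s, u i) = ∑ i ∈ s, d (u i) := by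
  classical
  induction s using Finset.induction with
  | empty => simpa using hd0
  | @insert _ _ hx ih => simp [Finset.sum_insert hx, hadd, ih]

lemma vmv_mul_vmv {F : Type*} [Field F] {n : ℕ} (f g u v : Fin n → F) :
    Matrix.vecMulVec f g * Matrix.vecMulVec u v
      = (∑ j, g j * u j) • Matrix.vecMulVec f v := by
  ext i k
  simp only [Matrix.mul_apply, Matrix.vecMulVec_apply, Matrix.smul_apply, smul_eq_mul,
    Finset.sum_mul]
  apply Finset.sum_congr rfl
  intro j _
  ring

/-- A Type 3 matrix `M = h·I + f gᵀ` (with `fᵀg = f'ᵀg = 0`) commutes with its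
entrywise derivative. -/
theorem type3_commutes_with_derivative {F : Type*} [Field F] (d : F → F) (hd : IsDeriv d)
    {n : ℕ} (h : F) (f g : Fin n → F)
    (h1 : ∑ i, f i * g i = 0)
    (h2 : ∑ i, d (f i) * g i = 0)
    (M : Matrix (Fin n) (Fin n) F)
    (hM : M = h • (1 : Matrix (Fin n) (Fin n) F) + Matrix.of fun i j => f i * g j) :
    M * M.map d = M.map d * M := by
  obtain ⟨hadd, hmul⟩ := hd
  have hd0 : d 0 = 0 := by
    have := hadd 0 0
    rw [add_zero] at this
    exact (left_eq_add.mp this)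
  have hd1 : d 1 = 0 := by
    have := hmul 1 1
    rw [mul_one, mul_one, one_mul] at this
    exact (left_eq_add.mp this)
  -- third orthogonality: ∑ f i * d (g i) = 0
  have h3 : ∑ i, f i * d (g i) = 0 := by
    have := congrArg d h1
    rw [hd0, deriv_sum_aux hadd hd0] at this
    simp only [hmul] at this
    rw [Finset.sum_add_distrib, h2, zero_add] at this
    exact this
  set A : Matrix (Fin n) (Fin n) F := Matrix.vecMulVec f g with hA
  set B : Matrix (Fin n) (Fin n) F :=
    Matrix.vecMulVec (fun i => d (f i)) g + Matrix.vecMulVec f (fun j => d (g j)) with hB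
  have hgf : ∑ j, g j * f j = 0 := by
    rw [← h1]; exact Finset.sum_congr rfl fun j _ => mul_comm _ _
  have hgdf : ∑ j, g j * d (f j) = 0 := by
    rw [← h2]; exact Finset.sum_congr rfl fun j _ => mul_comm _ _
  have hdgf : ∑ j, d (g j) * f j = 0 := by
    rw [← h3]; exact Finset.sum_congr rfl fun j _ => mul_comm _ _
  have hAB : A * B = 0 := by
    rw [hB, mul_add, hA, vmv_mul_vmv, vmv_mul_vmv, hgdf, hgf, zero_smul, zero_smul, add_zero]
  have hBA : B * A = 0 := by
    rw [hB, add_mul, hA, vmv_mul_vmv, vmv_mul_vmv, hgf, hdgf, zero_smul, zero_smul, add_zero]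
  have hmap : M.map d = d h • (1 : Matrix (Fin n) (Fin n) F) + B := by
    ext i j
    rw [hM]
    simp only [Matrix.map_apply, Matrix.add_apply, Matrix.smul_apply, Matrix.one_apply,
      Matrix.of_apply, hB, hA, Matrix.vecMulVec_apply, smul_eq_mul]
    by_cases hij : i = j
    · simp [hij, hadd, hmul, hd1]
    · simp [hij, hadd, hmul, hd0]
  have hMA : M = h • (1 : Matrix (Fin n) (Fin n) F) + A := by
    rw [hM]; rfl
  rw [hmap, hMA]
  simp only [mul_add, add_mul, Matrix.smul_mul, Matrix.mul_smul, Matrix.one_mul,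
    Matrix.mul_one, hAB, hBA, smul_smul]
  rw [mul_comm h (d h)]
  abel
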